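/- arXiv:2507.16603 — 6 statements merged into one kernel-verified Lean document; each statement's English description precedes it below -/
import Mathlib

section
/- Let τ be the honest random time on [s,t] associated with the continuous nonnegative intensity λ and driven by an Exp(1) random variable Y. Then for every r ∈ [s,t], P(τ ≤ r) = exp(-∫_r^t λ(u) du). -/
open MeasureTheory ProbabilityTheory Real

/-- The honest random time on `[s,t]` associated with the intensity `lam`,
driven by the value `y`: `max (s, inf {r ∈ [s,t] : ∫_r^t lam ≤ y})`. -/
noncomputable def honestTime (s t : ℝ) (lam : ℝ → ℝ) (y : ℝ) : ℝ :=
  max s (sInf {r | r ∈ Set.Icc s t ∧ ∫ u in r..t, lam u ≤ y})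

/-- For the honest random time `τ` on `[s,t]` driven by an `Exp(1)` random variable,
`P(τ ≤ r) = exp (-∫_r^t λ(u) du)` for every `r ∈ [s,t]`. -/
theorem honestTime_cdf
    {Ω : Type*} [MeasurableSpace Ω] (P : Measure Ω) [IsProbabilityMeasure P]
    (s t : ℝ) (hs : 0 ≤ s) (hst : s < t)
    (lam : ℝ → ℝ) (hlam : Continuous lam)
    (hlam_nonneg : ∀ u ∈ Set.Icc s t, 0 ≤ lam u)
    (Y : Ω → ℝ) (hY : Measurable Y) (hYlaw : P.map Y = expMeasure 1)
    (r : ℝ) (hr : r ∈ Set.Icc s t) :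
    P {ω | honestTime s t lam (Y ω) ≤ r}
      = ENNReal.ofReal (Real.exp (-(∫ u in r..t, lam u))) := by
  set F : ℝ → ℝ := fun x => ∫ u in x..t, lam u with hF
  set c : ℝ := F r with hc
  have hint : ∀ a b : ℝ, IntervalIntegrable lam volume a b :=
    fun a b => hlam.intervalIntegrable a b
  -- F nonneg on Icc s t
  have hFnonneg : ∀ x ∈ Set.Icc s t, 0 ≤ F x := by
    intro x hx
    exact intervalIntegral.integral_nonneg hx.2
      (fun u hu => hlam_nonneg u ⟨hx.1.trans hu.1, hu.2⟩)
  -- F antitone on Icc s t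
  have hFanti : ∀ x₁ ∈ Set.Icc s t, ∀ x₂ ∈ Set.Icc s t, x₁ ≤ x₂ → F x₂ ≤ F x₁ := by
    intro x₁ hx₁ x₂ hx₂ h12
    have hsplit : (∫ u in x₁..x₂, lam u) + ∫ u in x₂..t, lam u = ∫ u in x₁..t, lam u :=
      intervalIntegral.integral_add_adjacent_intervals (hint _ _) (hint _ _)
    have hpos : 0 ≤ ∫ u in x₁..x₂, lam u :=
      intervalIntegral.integral_nonneg h12
        (fun u hu => hlam_nonneg u ⟨hx₁.1.trans hu.1, hu.2.trans hx₂.2⟩)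
    simp only [hF]
    linarith
  have hFcont : Continuous F := by
    have h1 : Continuous fun x => ∫ u in t..x, lam u :=
      intervalIntegral.continuous_primitive hint t
    have : F = fun x => -∫ u in t..x, lam u := by
      funext x; rw [hF]; exact intervalIntegral.integral_symm t x
    rw [this]; exact h1.neg
  have hc_nonneg : 0 ≤ c := hFnonneg r hr
  -- key pointwise characterization
  have hkey : ∀ y : ℝ, honestTime s t lam y ≤ r ↔ (y < 0 ∨ c ≤ y) := by
    intro y
    rcases lt_or_ge y 0 with hy | hy
    · constructor
      · intro _; exact Or.inl hy
      · intro _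
        have hempty : {x | x ∈ Set.Icc s t ∧ F x ≤ y} = ∅ := by
          ext x; simp only [Set.mem_setOf_eq, Set.mem_empty_iff_false, iff_false, not_and]
          intro hx hxy
          exact absurd hxy (not_le.2 (lt_of_lt_of_le hy (hFnonneg x hx)))
        rw [honestTime]
        simp only [hF] at hempty
        rw [hempty, Real.sInf_empty]
        simp [max_eq_left hs, hr.1]
    · -- y ≥ 0
      set S : Set ℝ := {x | x ∈ Set.Icc s t ∧ F x ≤ y} with hS
      have hSne : S.Nonempty := by
        refine ⟨t, ⟨hst.le, le_rfl⟩, ?_⟩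
        simp [hF, intervalIntegral.integral_same, hy]
      have hSbdd : BddBelow S := ⟨s, fun x hx => hx.1.1⟩
      have hSclosed : IsClosed S := by
        have : S = Set.Icc s t ∩ F ⁻¹' Set.Iic y := by
          ext x; simp [hS, Set.mem_inter_iff, and_comm]
        rw [this]
        exact isClosed_Icc.inter (isClosed_Iic.preimage hFcont)
      have hmem : sInf S ∈ S := hSclosed.csInf_mem hSne hSbdd
      have hht : honestTime s t lam y = sInf S := by
        rw [honestTime]; exact max_eq_right hmem.1.1
      constructor
      · intro h
        rw [hht] at h
        have : F r ≤ F (sInf S) := hFanti _ hmem.1 _ hr h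
        exact Or.inr (this.trans hmem.2)
      · intro h
        rcases h with h | h
        · exact absurd hy (not_le.2 h)
        · have hrS : r ∈ S := ⟨hr, h⟩
          rw [hht]
          exact csInf_le hSbdd hrS
  -- rewrite the event as a preimage
  have hset : {ω | honestTime s t lam (Y ω) ≤ r} = Y ⁻¹' (Set.Iio 0 ∪ Set.Ici c) := by
    ext ω
    simp only [Set.mem_setOf_eq, Set.mem_preimage, Set.mem_union, Set.mem_Iio, Set.mem_Ici]
    exact hkey (Y ω)
  have hB : MeasurableSet (Set.Iio (0:ℝ) ∪ Set.Ici c) :=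
    measurableSet_Iio.union measurableSet_Ici
  rw [hset, ← Measure.map_apply hY hB, hYlaw]
  -- now compute the exponential measure of the set
  have hμ : IsProbabilityMeasure (expMeasure 1) := isProbabilityMeasure_expMeasure one_pos
  have hdisj : Disjoint (Set.Iio (0:ℝ)) (Set.Ici c) :=
    (Set.Iio_disjoint_Ici (le_refl (0:ℝ))).mono_right (Set.Ici_subset_Ici.2 hc_nonneg)
  rw [measure_union hdisj measurableSet_Ici]
  have hexp_eq : expMeasure 1 = volume.withDensity (exponentialPDF 1) := rfl
  have hIio0 : expMeasure 1 (Set.Iio 0) = 0 := by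
    rw [hexp_eq, withDensity_apply _ measurableSet_Iio]
    exact lintegral_exponentialPDF_of_nonpos le_rfl
  have hIic : expMeasure 1 (Set.Iic c) = ENNReal.ofReal (1 - Real.exp (-c)) := by
    rw [hexp_eq, withDensity_apply _ measurableSet_Iic]
    rw [lintegral_exponentialPDF_eq_antiDeriv one_pos c, if_pos hc_nonneg, one_mul]
  have hIio : expMeasure 1 (Set.Iio c) = ENNReal.ofReal (1 - Real.exp (-c)) := by
    rw [← hIic, hexp_eq, withDensity_apply _ measurableSet_Iio,
      withDensity_apply _ measurableSet_Iic]
    exact setLIntegral_congr MeasureTheory.Iio_ae_eq_Iic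
  have hIci : expMeasure 1 (Set.Ici c) = ENNReal.ofReal (Real.exp (-c)) := by
    have hcompl : Set.Ici c = (Set.Iio c)ᶜ := (Set.compl_Iio).symm
    rw [hcompl, measure_compl measurableSet_Iio (measure_ne_top _ _), hIio,
      measure_univ]
    rw [← ENNReal.ofReal_one, ← ENNReal.ofReal_sub _ (by have := Real.exp_le_one_iff.2 (neg_nonpos.2 hc_nonneg); linarith)]
    norm_num
  rw [hIio0, hIci, zero_add]
end

section
/- (Theorem 1, unbiasedness.) Let τ¹ be the honest random time on [s,t] associated with the intensity λ1 and driven by an Exp(1) random variable Y. Then E[exp(-∫_{τ¹}^t λ0(u) du)] = 1 - P01(s,t) = P00(s,t); equivalently, the conditional transition probability P00^{τ¹}(s,t) := exp(-∫_{τ¹}^t λ0(u) du) is an unbiased estimator of P00(s,t). -/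
open MeasureTheory ProbabilityTheory Real

lemma contL (t : ℝ) {f : ℝ → ℝ} (hf : Continuous f) :
    Continuous fun v => ∫ u in v..t, f u := by
  have : (fun v => ∫ u in v..t, f u) = fun v => -∫ u in t..v, f u := by
    funext v; rw [intervalIntegral.integral_symm]
  rw [this]
  exact (intervalIntegral.continuous_primitive (fun a b => hf.intervalIntegrable a b) t).neg

lemma hasDerivL (t : ℝ) {f : ℝ → ℝ} (hf : Continuous f) (v : ℝ) :
    HasDerivAt (fun v => ∫ u in v..t, f u) (-(f v)) v := by
  have h1 : HasDerivAt (fun v => ∫ u in t..v, f u) (f v) v :=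
    intervalIntegral.integral_hasDerivAt_right (hf.intervalIntegrable _ _)
      hf.stronglyMeasurable.stronglyMeasurableAtFilter hf.continuousAt
  have : (fun v => ∫ u in v..t, f u) = fun v => -∫ u in t..v, f u := by
    funext v; rw [intervalIntegral.integral_symm]
  rw [this]; exact h1.neg

lemma ftc_exp (t : ℝ) {f : ℝ → ℝ} (hf : Continuous f) (a : ℝ) :
    ∫ v in a..t, Real.exp (-(∫ u in v..t, f u)) * f v
      = 1 - Real.exp (-(∫ u in a..t, f u)) := by
  have hderiv : ∀ v ∈ Set.uIcc a t,
      HasDerivAt (fun v => Real.exp (-(∫ u in v..t, f u)))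
        (Real.exp (-(∫ u in v..t, f u)) * f v) v := by
    intro v _
    simpa using ((hasDerivL t hf v).neg).exp
  have hcont : Continuous fun v => Real.exp (-(∫ u in v..t, f u)) * f v :=
    (((contL t hf).neg).rexp).mul hf
  rw [intervalIntegral.integral_eq_sub_of_hasDerivAt hderiv (hcont.intervalIntegrable _ _)]
  simp [intervalIntegral.integral_same]

lemma expMeasure_eq : expMeasure 1 = MeasureTheory.volume.withDensity (exponentialPDF 1) := rfl

lemma expMeasure_Iio_zero : expMeasure 1 (Set.Iio 0) = 0 := by
  rw [expMeasure_eq, withDensity_apply _ measurableSet_Iio]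
  exact lintegral_exponentialPDF_of_nonpos le_rfl

lemma expMeasure_Ici {a : ℝ} (ha : 0 ≤ a) :
    (expMeasure 1 (Set.Ici a)).toReal = Real.exp (-a) := by
  haveI : IsProbabilityMeasure (expMeasure 1) := isProbabilityMeasure_expMeasure one_pos
  have hac : expMeasure 1 ≪ MeasureTheory.volume := by
    rw [expMeasure_eq]; exact withDensity_absolutelyContinuous _ _
  have hpt : expMeasure 1 {a} = 0 := hac (Real.volume_singleton)
  have hIio : expMeasure 1 (Set.Iio a) = expMeasure 1 (Set.Iic a) := by
    apply le_antisymm (measure_mono Set.Iio_subset_Iic_self)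
    calc expMeasure 1 (Set.Iic a) ≤ expMeasure 1 (Set.Iio a ∪ {a}) := by
          apply measure_mono; intro x hx
          rcases lt_or_eq_of_le (Set.mem_Iic.mp hx) with h | h
          · exact Set.mem_union_left _ h
          · exact Set.mem_union_right _ (by simp [h])
      _ ≤ expMeasure 1 (Set.Iio a) + expMeasure 1 {a} := measure_union_le _ _
      _ = expMeasure 1 (Set.Iio a) := by rw [hpt, add_zero]
  have hIic : expMeasure 1 (Set.Iic a) = ENNReal.ofReal (1 - Real.exp (-a)) := by
    have h1 : (expMeasure 1 (Set.Iic a)).toReal = 1 - Real.exp (-a) := by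
      have := (cdf_eq_real (expMeasure 1) a).trans (measureReal_def _ _)
      rw [← this]
      rw [cdf_expMeasure_eq one_pos a, if_pos ha, one_mul]
    rw [← h1, ENNReal.ofReal_toReal (measure_ne_top _ _)]
  have hcompl : expMeasure 1 (Set.Ici a) = 1 - expMeasure 1 (Set.Iio a) := by
    rw [← Set.compl_Iio, measure_compl measurableSet_Iio (measure_ne_top _ _), measure_univ]
  have hle : Real.exp (-a) ≤ 1 := Real.exp_le_one_iff.mpr (neg_nonpos.mpr ha)
  rw [hcompl, hIio, hIic]
  have : (1 : ENNReal) - ENNReal.ofReal (1 - Real.exp (-a)) = ENNReal.ofReal (Real.exp (-a)) := by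
    rw [← ENNReal.ofReal_one, ← ENNReal.ofReal_sub 1 (sub_nonneg.mpr hle)]
    congr 1; ring
  rw [this, ENNReal.toReal_ofReal (Real.exp_nonneg _)]

lemma honestTime_spec {s t : ℝ} (hst : s ≤ t) {lam : ℝ → ℝ} (hlam : Continuous lam)
    (hnn : ∀ u ∈ Set.Icc s t, 0 ≤ lam u) {y : ℝ} (hy : 0 ≤ y) :
    honestTime s t lam y ∈ Set.Icc s t ∧
      ∀ v ∈ Set.Icc s t, ((∫ u in v..t, lam u) ≤ y ↔ honestTime s t lam y ≤ v) := by
  set S : Set ℝ := {r | r ∈ Set.Icc s t ∧ ∫ u in r..t, lam u ≤ y} with hS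
  have htS : t ∈ S := by
    refine ⟨⟨hst, le_rfl⟩, ?_⟩
    rw [intervalIntegral.integral_same]; exact hy
  have hne : S.Nonempty := ⟨t, htS⟩
  have hbdd : BddBelow S := ⟨s, fun r hr => hr.1.1⟩
  have hclosed : IsClosed S := by
    have : S = Set.Icc s t ∩ (fun r => ∫ u in r..t, lam u) ⁻¹' Set.Iic y := by
      ext r; simp [hS, Set.mem_Icc, and_comm]
    rw [this]
    exact isClosed_Icc.inter (isClosed_Iic.preimage (contL t hlam))
  have hcS : sInf S ∈ S := hclosed.csInf_mem hne hbdd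
  have hsc : s ≤ sInf S := le_csInf hne fun r hr => hr.1.1
  have hτ : honestTime s t lam y = sInf S := max_eq_right hsc
  have hmem : honestTime s t lam y ∈ Set.Icc s t := by rw [hτ]; exact hcS.1
  refine ⟨hmem, fun v hv => ?_⟩
  rw [hτ]
  constructor
  · intro h; exact csInf_le hbdd ⟨hv, h⟩
  · intro h
    -- L1 v ≤ L1 (sInf S) ≤ y, by nonnegativity of lam on [sInf S, v]
    have hint : (∫ u in (sInf S)..t, lam u) = (∫ u in (sInf S)..v, lam u) + ∫ u in v..t, lam u :=
      (intervalIntegral.integral_add_adjacent_intervals (hlam.intervalIntegrable _ _)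
        (hlam.intervalIntegrable _ _)).symm
    have hnonneg : 0 ≤ ∫ u in (sInf S)..v, lam u := by
      apply intervalIntegral.integral_nonneg h
      intro u hu
      exact hnn u ⟨le_trans hsc hu.1, le_trans hu.2 hv.2⟩
    have := hcS.2
    rw [hint] at this
    linarith

lemma pointwise_key {s t : ℝ} (hst : s ≤ t) {lam0 lam1 : ℝ → ℝ}
    (h0 : Continuous lam0) (h1 : Continuous lam1)
    (hnn1 : ∀ u ∈ Set.Icc s t, 0 ≤ lam1 u) {y : ℝ} (hy : 0 ≤ y) :
    Real.exp (-(∫ u in (honestTime s t lam1 y)..t, lam0 u))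
      = 1 - ∫ v in Set.Ioc s t,
          Set.indicator {v | (∫ u in v..t, lam1 u) ≤ y}
            (fun v => Real.exp (-(∫ u in v..t, lam0 u)) * lam0 v) v := by
  obtain ⟨hmem, hiff⟩ := honestTime_spec hst h1 hnn1 hy
  set c := honestTime s t lam1 y with hc
  set A : Set ℝ := (fun v => ∫ u in v..t, lam1 u) ⁻¹' Set.Iic y with hA
  have hAset : {v | (∫ u in v..t, lam1 u) ≤ y} = A := rfl
  set h : ℝ → ℝ := fun v => Real.exp (-(∫ u in v..t, lam0 u)) * lam0 v with hh
  have hAmeas : MeasurableSet A := (isClosed_Iic.preimage (contL t h1)).measurableSet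
  have heq : (A ∩ Set.Ioc s t : Set ℝ) =ᵐ[MeasureTheory.volume] (Set.Ioc c t : Set ℝ) := by
    rw [MeasureTheory.ae_eq_set]
    constructor
    · refine measure_mono_null (fun v hv => ?_) (measure_singleton c)
      · obtain ⟨⟨hvA, hvIoc⟩, hnot⟩ := hv
        have hvIcc : v ∈ Set.Icc s t := ⟨hvIoc.1.le, hvIoc.2⟩
        have hcv : c ≤ v := (hiff v hvIcc).mp hvA
        simp only [Set.mem_Ioc, not_and_or, not_lt, not_le] at hnot
        rcases hnot with h' | h'
        · exact le_antisymm h' hcv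
        · exact absurd hvIoc.2 (not_le.mpr h')
    · convert measure_empty (μ := MeasureTheory.volume) (α := ℝ)
      rw [Set.diff_eq_empty]
      rintro v ⟨hcv, hvt⟩
      have hvIcc : v ∈ Set.Icc s t := ⟨le_trans hmem.1 hcv.le, hvt⟩
      exact ⟨(hiff v hvIcc).mpr hcv.le, ⟨lt_of_le_of_lt hmem.1 hcv, hvt⟩⟩
  have : ∫ v in Set.Ioc s t, Set.indicator A h v
      = ∫ v in c..t, h v := by
    rw [MeasureTheory.integral_indicator hAmeas, MeasureTheory.Measure.restrict_restrict hAmeas,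
      MeasureTheory.setIntegral_congr_set heq, intervalIntegral.integral_of_le hmem.2]
  rw [hAset, this, ftc_exp t h0 c]
  ring

/-- Theorem 1 (unbiasedness): with `τ¹` the honest time on `[s,t]` associated with `λ₁`,
driven by an `Exp(1)` random variable, the conditional transition probability
`P₀₀^{τ¹}(s,t) = exp (-∫_{τ¹}^t λ₀(u) du)` is an unbiased estimator of
`P₀₀(s,t) = 1 - P₀₁(s,t) = 1 - ∫_s^t exp (-∫_v^t (λ₀+λ₁)(r) dr) λ₀(v) dv`. -/
theorem unbiased_P00
    {Ω : Type*} [MeasurableSpace Ω] (P : Measure Ω) [IsProbabilityMeasure P]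
    (s t : ℝ) (hs : 0 ≤ s) (hst : s < t)
    (lam0 lam1 : ℝ → ℝ) (hlam0 : Continuous lam0) (hlam1 : Continuous lam1)
    (hlam0_nonneg : ∀ u ∈ Set.Icc s t, 0 ≤ lam0 u)
    (hlam1_nonneg : ∀ u ∈ Set.Icc s t, 0 ≤ lam1 u)
    (Y : Ω → ℝ) (hY : Measurable Y) (hYlaw : P.map Y = expMeasure 1) :
    (∫ ω, Real.exp (-(∫ u in (honestTime s t lam1 (Y ω))..t, lam0 u)) ∂P)
      = 1 - ∫ v in s..t,
          Real.exp (-(∫ r in v..t, (lam0 r + lam1 r))) * lam0 v := by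
  set ν : Measure ℝ := MeasureTheory.volume.restrict (Set.Ioc s t) with hν
  set h : ℝ → ℝ := fun v => Real.exp (-(∫ u in v..t, lam0 u)) * lam0 v with hh
  set f : Ω → ℝ → ℝ :=
    fun ω v => Set.indicator {v | (∫ u in v..t, lam1 u) ≤ Y ω} h v with hf
  have hY0 : ∀ᵐ ω ∂P, 0 ≤ Y ω := by
    have h0 : P {ω | Y ω < 0} = 0 := by
      have heq : {ω | Y ω < 0} = Y ⁻¹' (Set.Iio 0) := rfl
      rw [heq, ← Measure.map_apply hY measurableSet_Iio, hYlaw]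
      exact expMeasure_Iio_zero
    rw [MeasureTheory.ae_iff]
    simpa [not_le] using h0
  have hkey : ∀ᵐ ω ∂P,
      Real.exp (-(∫ u in (honestTime s t lam1 (Y ω))..t, lam0 u)) = 1 - ∫ v, f ω v ∂ν := by
    filter_upwards [hY0] with ω hω
    exact pointwise_key hst.le hlam0 hlam1 hlam1_nonneg hω
  rw [MeasureTheory.integral_congr_ae hkey]
  have hAmeas : MeasurableSet {p : Ω × ℝ | (∫ u in p.2..t, lam1 u) ≤ Y p.1} :=
    measurableSet_le ((contL t hlam1).measurable.comp measurable_snd) (hY.comp measurable_fst)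
  have hcont_h : Continuous h := ((contL t hlam0).neg.rexp).mul hlam0
  have hint_h : MeasureTheory.Integrable h ν := hcont_h.integrableOn_Ioc
  have hsnd : MeasureTheory.Integrable (fun p : Ω × ℝ => h p.2) (P.prod ν) := by
    have hmap : (P.prod ν).map Prod.snd = ν := by
      rw [Measure.map_snd_prod, measure_univ, one_smul]
    have hmeas : AEStronglyMeasurable h ((P.prod ν).map Prod.snd) := by
      rw [hmap]; exact hcont_h.aestronglyMeasurable
    have := (integrable_map_measure hmeas measurable_snd.aemeasurable).mp (by rwa [hmap])
    exact this
  have huncurry : Function.uncurry f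
      = Set.indicator {p : Ω × ℝ | (∫ u in p.2..t, lam1 u) ≤ Y p.1} (fun p => h p.2) := by
    funext p
    simp only [Function.uncurry, hf, Set.indicator_apply, Set.mem_setOf_eq]
  have hF : MeasureTheory.Integrable (Function.uncurry f) (P.prod ν) := by
    rw [huncurry]; exact hsnd.indicator hAmeas
  have hinner_int : MeasureTheory.Integrable (fun ω => ∫ v, f ω v ∂ν) P := hF.integral_prod_left
  rw [MeasureTheory.integral_sub (integrable_const 1) hinner_int]
  have hone : ∫ (_ : Ω), (1 : ℝ) ∂P = 1 := by simp
  rw [hone]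
  congr 1
  rw [MeasureTheory.integral_integral_swap hF]
  have hptω : ∀ v : ℝ, (∫ ω, f ω v ∂P)
      = (P (Y ⁻¹' Set.Ici (∫ u in v..t, lam1 u))).toReal * h v := by
    intro v
    have heqf : (fun ω => f ω v)
        = Set.indicator (Y ⁻¹' Set.Ici (∫ u in v..t, lam1 u)) (fun _ => h v) := by
      funext ω
      by_cases hc : (∫ u in v..t, lam1 u) ≤ Y ω <;>
        simp [hf, Set.indicator_apply, hc, Set.mem_Ici]
    rw [heqf, integral_indicator_const _ (hY measurableSet_Ici), smul_eq_mul, measureReal_def]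
  calc ∫ v, (∫ ω, f ω v ∂P) ∂ν
      = ∫ v in Set.Ioc s t, Real.exp (-(∫ r in v..t, (lam0 r + lam1 r))) * lam0 v := by
        apply setIntegral_congr_fun measurableSet_Ioc
        intro v hv
        dsimp only
        rw [hptω v]
        have hL1nn : 0 ≤ ∫ u in v..t, lam1 u :=
          intervalIntegral.integral_nonneg hv.2
            (fun u hu => hlam1_nonneg u ⟨le_trans hv.1.le hu.1, hu.2⟩)
        have hPY : P (Y ⁻¹' Set.Ici (∫ u in v..t, lam1 u))
            = expMeasure 1 (Set.Ici (∫ u in v..t, lam1 u)) := by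
          rw [← hYlaw, Measure.map_apply hY measurableSet_Ici]
        rw [hPY, expMeasure_Ici hL1nn,
          intervalIntegral.integral_add (hlam0.intervalIntegrable _ _)
            (hlam1.intervalIntegrable _ _), hh]
        rw [neg_add, Real.exp_add]
        ring
    _ = ∫ v in s..t, Real.exp (-(∫ r in v..t, (lam0 r + lam1 r))) * lam0 v :=
        (intervalIntegral.integral_of_le hst.le).symm
end

section
/- (Pair representation of P10.) Let Y¹ and Y⁰ be independent random variables, each exponentially distributed with rate 1, let τ¹ be the honest random time on [s,t] associated with the intensity λ1 and driven by Y¹, and let τ⁰ be the honest random time on [s,t] associated with the intensity λ0 and driven by Y⁰. Then P(τ¹ > τ⁰) = P10(s,t); in particular the indicator 1(τ¹ > τ⁰) is an unbiased estimator of P10(s,t). -/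
open MeasureTheory ProbabilityTheory Real
open scoped ENNReal

namespace HonestAux

open Set

variable {s t : ℝ} {lam : ℝ → ℝ}

lemma hasDerivAt_Lam (hlam : Continuous lam) (t v : ℝ) :
    HasDerivAt (fun v => ∫ u in v..t, lam u) (-lam v) v :=
  intervalIntegral.integral_hasDerivAt_left (hlam.intervalIntegrable v t)
    hlam.aestronglyMeasurable.stronglyMeasurableAtFilter hlam.continuousAt

lemma continuous_Lam (hlam : Continuous lam) (t : ℝ) :
    Continuous fun v => ∫ u in v..t, lam u :=
  continuous_iff_continuousAt.2 fun v => (hasDerivAt_Lam hlam t v).continuousAt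

lemma Lam_nonneg (hst : s ≤ t) (hnn : ∀ u ∈ Set.Icc s t, 0 ≤ lam u)
    {v : ℝ} (hv : v ∈ Set.Icc s t) : 0 ≤ ∫ u in v..t, lam u :=
  intervalIntegral.integral_nonneg hv.2 fun u hu => hnn u ⟨le_trans hv.1 hu.1, hu.2⟩

lemma Lam_antitone (hlam : Continuous lam) (hnn : ∀ u ∈ Set.Icc s t, 0 ≤ lam u)
    {v w : ℝ} (hv : v ∈ Set.Icc s t) (hw : w ∈ Set.Icc s t) (hvw : v ≤ w) :
    (∫ u in w..t, lam u) ≤ ∫ u in v..t, lam u := by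
  have h : (∫ u in v..w, lam u) + ∫ u in w..t, lam u = ∫ u in v..t, lam u :=
    intervalIntegral.integral_add_adjacent_intervals (hlam.intervalIntegrable v w)
      (hlam.intervalIntegrable w t)
  have h0 : 0 ≤ ∫ u in v..w, lam u :=
    intervalIntegral.integral_nonneg hvw fun u hu =>
      hnn u ⟨le_trans hv.1 hu.1, le_trans hu.2 hw.2⟩
  linarith

/-- the defining set -/
lemma honest_set_eq (y : ℝ) :
    {r | r ∈ Set.Icc s t ∧ ∫ u in r..t, lam u ≤ y} =
      Set.Icc s t ∩ (fun r => ∫ u in r..t, lam u) ⁻¹' Set.Iic y := rfl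

lemma honest_bddBelow (y : ℝ) :
    BddBelow {r | r ∈ Set.Icc s t ∧ ∫ u in r..t, lam u ≤ y} :=
  ⟨s, fun r hr => hr.1.1⟩

lemma honest_set_empty (hst : s ≤ t) (hnn : ∀ u ∈ Set.Icc s t, 0 ≤ lam u)
    {y : ℝ} (hy : y < 0) :
    {r | r ∈ Set.Icc s t ∧ ∫ u in r..t, lam u ≤ y} = (∅ : Set ℝ) := by
  ext r
  simp only [Set.mem_setOf_eq, Set.mem_empty_iff_false, iff_false, not_and]
  intro hr hle
  exact absurd (le_trans (Lam_nonneg hst hnn hr) hle) (not_le.2 hy)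

lemma honestTime_of_neg (hs : 0 ≤ s) (hst : s ≤ t)
    (hnn : ∀ u ∈ Set.Icc s t, 0 ≤ lam u) {y : ℝ} (hy : y < 0) :
    honestTime s t lam y = s := by
  rw [honestTime, honest_set_empty hst hnn hy, Real.sInf_empty, max_eq_left hs]

lemma honest_t_mem (hst : s ≤ t) {y : ℝ} (hy : 0 ≤ y) :
    t ∈ {r | r ∈ Set.Icc s t ∧ ∫ u in r..t, lam u ≤ y} := by
  refine ⟨⟨hst, le_refl t⟩, ?_⟩
  rw [intervalIntegral.integral_same]
  exact hy

lemma honestTime_mem (hs : 0 ≤ s) (hst : s ≤ t)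
    (hnn : ∀ u ∈ Set.Icc s t, 0 ≤ lam u) (y : ℝ) :
    honestTime s t lam y ∈ Set.Icc s t := by
  rcases lt_or_ge y 0 with hy | hy
  · rw [honestTime_of_neg hs hst hnn hy]
    exact ⟨le_refl s, hst⟩
  · constructor
    · exact le_max_left _ _
    · rw [honestTime]
      refine max_le hst ?_
      exact csInf_le (honest_bddBelow y) (honest_t_mem hst hy)

/-- Key characterization: for `y ≥ 0` and `v ∈ [s,t]`,
`honestTime s t lam y > v ↔ y < ∫_v^t lam`. -/
lemma honestTime_gt_iff (hlam : Continuous lam) (hst : s ≤ t)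
    (hnn : ∀ u ∈ Set.Icc s t, 0 ≤ lam u)
    {y v : ℝ} (hy : 0 ≤ y) (hv : v ∈ Set.Icc s t) :
    v < honestTime s t lam y ↔ y < ∫ u in v..t, lam u := by
  set S := {r | r ∈ Set.Icc s t ∧ ∫ u in r..t, lam u ≤ y} with hS
  constructor
  · intro h
    by_contra hle
    push_neg at hle
    have hvS : v ∈ S := ⟨hv, hle⟩
    have h1 : sInf S ≤ v := csInf_le (honest_bddBelow y) hvS
    have h2 : honestTime s t lam y ≤ v := by
      rw [honestTime]
      exact max_le hv.1 h1
    exact absurd h (not_lt.2 h2)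
  · intro h
    have hSclosed : IsClosed S := by
      rw [hS, honest_set_eq]
      exact isClosed_Icc.inter (isClosed_Iic.preimage (continuous_Lam hlam t))
    have hSne : S.Nonempty := ⟨t, honest_t_mem hst hy⟩
    have hmem : sInf S ∈ S := hSclosed.csInf_mem hSne (honest_bddBelow y)
    have hgt : v < sInf S := by
      by_contra hle
      push_neg at hle
      have := Lam_antitone hlam hnn hmem.1 hv hle
      have := hmem.2
      linarith
    exact lt_of_lt_of_le hgt (le_max_right _ _)

lemma honestTime_antitone_nonneg (hlam : Continuous lam) (hst : s ≤ t)
    {y y' : ℝ} (hy : 0 ≤ y) (hyy : y ≤ y') :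
    honestTime s t lam y' ≤ honestTime s t lam y := by
  refine max_le_max (le_refl s) ?_
  refine csInf_le_csInf (honest_bddBelow y') ⟨t, honest_t_mem hst hy⟩ ?_
  intro r hr
  exact ⟨hr.1, le_trans hr.2 hyy⟩

lemma honestTime_measurable (hlam : Continuous lam) (hs : 0 ≤ s) (hst : s ≤ t)
    (hnn : ∀ u ∈ Set.Icc s t, 0 ≤ lam u) :
    Measurable (honestTime s t lam) := by
  have hanti : Antitone fun y => honestTime s t lam (max 0 y) := by
    intro y y' hyy
    exact honestTime_antitone_nonneg hlam hst (le_max_left 0 y)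
      (max_le_max (le_refl 0) hyy)
  have heq : honestTime s t lam =
      (Set.Iio (0:ℝ)).piecewise (fun _ => s) (fun y => honestTime s t lam (max 0 y)) := by
    funext y
    rcases lt_or_ge y 0 with hy | hy
    · rw [Set.piecewise_eq_of_mem _ _ _ (Set.mem_Iio.2 hy)]
      exact honestTime_of_neg hs hst hnn hy
    · rw [Set.piecewise_eq_of_notMem _ _ _ (by simpa using hy), max_eq_right hy]
  rw [heq]
  exact Measurable.piecewise measurableSet_Iio measurable_const hanti.measurable

/-- FTC step: `∫_v^t lam u * exp(-∫_u^t lam) du = 1 - exp(-∫_v^t lam)`. -/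
lemma ftc_exp (hlam : Continuous lam) {v : ℝ} (hvt : v ≤ t) :
    (∫ u in v..t, lam u * Real.exp (-(∫ r in u..t, lam r)))
      = 1 - Real.exp (-(∫ r in v..t, lam r)) := by
  have hderiv : ∀ u ∈ Set.uIcc v t,
      HasDerivAt (fun x => Real.exp (-(∫ r in x..t, lam r)))
        (lam u * Real.exp (-(∫ r in u..t, lam r))) u := by
    intro u _
    have h1 : HasDerivAt (fun x => -(∫ r in x..t, lam r)) (lam u) u := by
      have := (hasDerivAt_Lam hlam t u).neg
      rw [neg_neg] at this
      exact this
    have h2 := h1.exp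
    simpa [mul_comm] using h2
  have hcont : Continuous fun u => lam u * Real.exp (-(∫ r in u..t, lam r)) :=
    hlam.mul ((continuous_Lam hlam t).neg.rexp)
  have := intervalIntegral.integral_eq_sub_of_hasDerivAt hderiv
    (hcont.intervalIntegrable v t)
  rw [this, intervalIntegral.integral_same, neg_zero, Real.exp_zero]

/-! Exponential measure computations. -/

lemma expMeasure_one_apply {S : Set ℝ} (hS : MeasurableSet S) :
    expMeasure 1 S = ∫⁻ y in S, exponentialPDF 1 y := by
  rw [expMeasure, gammaMeasure, withDensity_apply _ hS]
  rfl

lemma measure_union_null_left {μ : Measure ℝ} {A B : Set ℝ} (h : μ A = 0) :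
    μ (A ∪ B) = μ B :=
  le_antisymm (le_trans (measure_union_le A B) (by rw [h, zero_add]))
    (measure_mono Set.subset_union_right)

lemma expMeasure_Iio_zero : expMeasure 1 (Set.Iio 0) = 0 := by
  rw [expMeasure_one_apply measurableSet_Iio]
  exact lintegral_exponentialPDF_of_nonpos le_rfl

lemma expMeasure_singleton (c : ℝ) : expMeasure 1 {c} = 0 := by
  rw [expMeasure_one_apply (measurableSet_singleton c),
    Measure.restrict_eq_zero.2 (volume_singleton), lintegral_zero_measure]

lemma expMeasure_Iic {c : ℝ} (hc : 0 ≤ c) :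
    expMeasure 1 (Set.Iic c) = ENNReal.ofReal (1 - Real.exp (-c)) := by
  rw [expMeasure_one_apply measurableSet_Iic,
    lintegral_exponentialPDF_eq_antiDeriv one_pos, if_pos hc, one_mul]

lemma expMeasure_Iio {c : ℝ} (hc : 0 ≤ c) :
    expMeasure 1 (Set.Iio c) = ENNReal.ofReal (1 - Real.exp (-c)) := by
  have h : Set.Iic c = {c} ∪ Set.Iio c := by
    ext x; simp [le_iff_lt_or_eq, or_comm, eq_comm]
  have := expMeasure_Iic hc
  rw [h, measure_union_null_left (expMeasure_singleton c)] at this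
  exact this

lemma expMeasure_Ico {c : ℝ} (hc : 0 ≤ c) :
    expMeasure 1 (Set.Ico 0 c) = ENNReal.ofReal (1 - Real.exp (-c)) := by
  have h : Set.Iio c = Set.Iio 0 ∪ Set.Ico 0 c := by
    ext x
    simp only [Set.mem_Iio, Set.mem_union, Set.mem_Ico]
    constructor
    · intro hx
      rcases le_or_gt 0 x with h0 | h0
      · exact Or.inr ⟨h0, hx⟩
      · exact Or.inl h0
    · rintro (hx | ⟨_, hx⟩)
      · exact lt_of_lt_of_le hx hc
      · exact hx
  have := expMeasure_Iio hc
  rw [h, measure_union_null_left expMeasure_Iio_zero] at this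
  exact this

lemma expMeasure_Ici {c : ℝ} (hc : 0 ≤ c) :
    expMeasure 1 (Set.Ici c) = ENNReal.ofReal (Real.exp (-c)) := by
  haveI : IsProbabilityMeasure (expMeasure 1) := isProbabilityMeasure_expMeasure one_pos
  have h : Set.Ici c = (Set.Iio c)ᶜ := by simp
  rw [h, measure_compl measurableSet_Iio (measure_ne_top _ _), measure_univ,
    expMeasure_Iio hc]
  have h1 : Real.exp (-c) ≤ 1 := Real.exp_le_one_iff.2 (neg_nonpos.2 hc)
  have h2 : (0:ℝ) ≤ 1 - Real.exp (-c) := by linarith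
  rw [← ENNReal.ofReal_one, ← ENNReal.ofReal_sub _ h2]
  norm_num

lemma expMeasure_Ioi {c : ℝ} (hc : 0 ≤ c) :
    expMeasure 1 (Set.Ioi c) = ENNReal.ofReal (Real.exp (-c)) := by
  have h : Set.Ici c = {c} ∪ Set.Ioi c := by
    ext x; simp [Set.mem_Ici, le_iff_lt_or_eq, eq_comm, or_comm]
  have := expMeasure_Ici hc
  rw [h, measure_union_null_left (expMeasure_singleton c)] at this
  exact this

/-- Sandwich: if `Ioi c ⊆ S ⊆ Ici c ∪ Iio 0` then `expMeasure 1 S = exp (-c)`. -/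
lemma expMeasure_sandwich {c : ℝ} (hc : 0 ≤ c) {S : Set ℝ}
    (h1 : Set.Ioi c ⊆ S) (h2 : S ⊆ Set.Ici c ∪ Set.Iio 0) :
    expMeasure 1 S = ENNReal.ofReal (Real.exp (-c)) := by
  refine le_antisymm ?_ ?_
  · calc expMeasure 1 S ≤ expMeasure 1 (Set.Ici c ∪ Set.Iio 0) := measure_mono h2
      _ ≤ expMeasure 1 (Set.Ici c) + expMeasure 1 (Set.Iio 0) := measure_union_le _ _
      _ = ENNReal.ofReal (Real.exp (-c)) := by
          rw [expMeasure_Iio_zero, add_zero, expMeasure_Ici hc]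
  · rw [← expMeasure_Ioi hc]
    exact measure_mono h1

end HonestAux

/-- Pair representation of `P₁₀`: with `τ¹`, `τ⁰` the honest times on `[s,t]` associated
with `λ₁`, `λ₀`, driven by independent `Exp(1)` random variables,
`P(τ¹ > τ⁰) = P₁₀(s,t) = ∫_s^t exp (-∫_v^t (λ₀+λ₁)(r) dr) λ₁(v) dv`;
the indicator `1(τ¹ > τ⁰)` is an unbiased estimator of `P₁₀(s,t)`. -/
theorem pair_representation_P10
    {Ω : Type*} [MeasurableSpace Ω] (P : Measure Ω) [IsProbabilityMeasure P]
    (s t : ℝ) (hs : 0 ≤ s) (hst : s < t)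
    (lam0 lam1 : ℝ → ℝ) (hlam0 : Continuous lam0) (hlam1 : Continuous lam1)
    (hlam0_nonneg : ∀ u ∈ Set.Icc s t, 0 ≤ lam0 u)
    (hlam1_nonneg : ∀ u ∈ Set.Icc s t, 0 ≤ lam1 u)
    (Y1 Y0 : Ω → ℝ) (hY1 : Measurable Y1) (hY0 : Measurable Y0)
    (hY1law : P.map Y1 = expMeasure 1) (hY0law : P.map Y0 = expMeasure 1)
    (hindep : IndepFun Y1 Y0 P) :
    P {ω | honestTime s t lam1 (Y1 ω) > honestTime s t lam0 (Y0 ω)}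
      = ENNReal.ofReal
          (∫ v in s..t, Real.exp (-(∫ r in v..t, (lam0 r + lam1 r))) * lam1 v) := by
  classical
  have hst' : s ≤ t := le_of_lt hst
  have hτ1meas : Measurable (honestTime s t lam1) :=
    HonestAux.honestTime_measurable hlam1 hs hst' hlam1_nonneg
  have hτ0meas : Measurable (honestTime s t lam0) :=
    HonestAux.honestTime_measurable hlam0 hs hst' hlam0_nonneg
  haveI : IsProbabilityMeasure (expMeasure 1) := isProbabilityMeasure_expMeasure one_pos
  -- the event as a product set
  set C : Set (ℝ × ℝ) := {p | honestTime s t lam0 p.2 < honestTime s t lam1 p.1} with hC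
  have hCmeas : MeasurableSet C :=
    measurableSet_lt (hτ0meas.comp measurable_snd) (hτ1meas.comp measurable_fst)
  have hmap : P.map (fun ω => (Y1 ω, Y0 ω)) = (expMeasure 1).prod (expMeasure 1) := by
    rw [(ProbabilityTheory.indepFun_iff_map_prod_eq_prod_map_map
      hY1.aemeasurable hY0.aemeasurable).mp hindep, hY1law, hY0law]
  have hstep1 : P {ω | honestTime s t lam1 (Y1 ω) > honestTime s t lam0 (Y0 ω)}
      = ((expMeasure 1).prod (expMeasure 1)) C := by
    rw [← hmap, Measure.map_apply (hY1.prodMk hY0) hCmeas]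
    rfl
  -- the integrand g
  set g : ℝ → ℝ := fun u => lam1 u * Real.exp (-(∫ r in u..t, lam1 r)) with hgdef
  have hgcont : Continuous g := hlam1.mul ((HonestAux.continuous_Lam hlam1 t).neg.rexp)
  -- the sectionwise measure
  have hsec : ∀ y0 : ℝ, (expMeasure 1) ((fun y1 => (y1, y0)) ⁻¹' C)
      = ∫⁻ u in Set.Ioc s t,
          (Set.Ioi (honestTime s t lam0 y0)).indicator
            (fun u => ENNReal.ofReal (g u)) u := by
    intro y0
    have hv : honestTime s t lam0 y0 ∈ Set.Icc s t :=
      HonestAux.honestTime_mem hs hst' hlam0_nonneg y0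
    set v := honestTime s t lam0 y0 with hvdef
    have hΛnn : 0 ≤ ∫ r in v..t, lam1 r := HonestAux.Lam_nonneg hst' hlam1_nonneg hv
    have hsect : ((fun y1 => (y1, y0)) ⁻¹' C) = Set.Ico 0 (∫ r in v..t, lam1 r) := by
      ext y1
      simp only [Set.mem_preimage, hC, Set.mem_setOf_eq, Set.mem_Ico]
      constructor
      · intro h
        have hy1 : 0 ≤ y1 := by
          by_contra hneg
          push_neg at hneg
          rw [HonestAux.honestTime_of_neg hs hst' hlam1_nonneg hneg] at h
          exact absurd h (not_lt.2 hv.1)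
        exact ⟨hy1, (HonestAux.honestTime_gt_iff hlam1 hst' hlam1_nonneg hy1 hv).1 h⟩
      · rintro ⟨hy1, hlt⟩
        exact (HonestAux.honestTime_gt_iff hlam1 hst' hlam1_nonneg hy1 hv).2 hlt
    rw [hsect, HonestAux.expMeasure_Ico hΛnn]
    rw [lintegral_indicator measurableSet_Ioi, Measure.restrict_restrict measurableSet_Ioi]
    have hIoc : Set.Ioi v ∩ Set.Ioc s t = Set.Ioc v t := by
      ext u
      simp only [Set.mem_inter_iff, Set.mem_Ioi, Set.mem_Ioc]
      constructor
      · rintro ⟨h1, _, h3⟩; exact ⟨h1, h3⟩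
      · rintro ⟨h1, h2⟩; exact ⟨h1, lt_of_le_of_lt hv.1 h1, h2⟩
    rw [hIoc]
    have hint : IntegrableOn g (Set.Ioc v t) :=
      hgcont.integrableOn_Ioc
    have hnn : 0 ≤ᵐ[volume.restrict (Set.Ioc v t)] g := by
      refine (ae_restrict_iff' measurableSet_Ioc).2 (ae_of_all _ ?_)
      intro u hu
      exact mul_nonneg (hlam1_nonneg u ⟨le_trans hv.1 (le_of_lt hu.1), hu.2⟩)
        (Real.exp_nonneg _)
    rw [← MeasureTheory.ofReal_integral_eq_lintegral_ofReal hint hnn,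
      ← intervalIntegral.integral_of_le hv.2, hgdef]
    rw [HonestAux.ftc_exp hlam1 hv.2]
  -- the product set D for Fubini
  set D : Set (ℝ × ℝ) := {p | honestTime s t lam0 p.1 < p.2} with hD
  have hDmeas : MeasurableSet D :=
    measurableSet_lt (hτ0meas.comp measurable_fst) measurable_snd
  set F : ℝ → ℝ → ℝ≥0∞ := fun y0 u =>
    (Set.Ioi (honestTime s t lam0 y0)).indicator (fun u => ENNReal.ofReal (g u)) u
    with hF
  have hFmeas : Measurable (Function.uncurry F) := by
    have heq : Function.uncurry F = D.indicator (fun p => ENNReal.ofReal (g p.2)) := by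
      funext p
      by_cases h : honestTime s t lam0 p.1 < p.2
      · simp [Function.uncurry, hF, Set.indicator_apply, Set.mem_Ioi, hD,
          Set.mem_setOf_eq, h]
      · simp [Function.uncurry, hF, Set.indicator_apply, Set.mem_Ioi, hD,
          Set.mem_setOf_eq, h]
    rw [heq]
    exact ((ENNReal.measurable_ofReal.comp (hgcont.measurable.comp
      measurable_snd))).indicator hDmeas
  -- Fubini
  have hswap : ∫⁻ y0, (∫⁻ u in Set.Ioc s t, F y0 u) ∂(expMeasure 1)
      = ∫⁻ u in Set.Ioc s t, (∫⁻ y0, F y0 u ∂(expMeasure 1)) :=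
    lintegral_lintegral_swap hFmeas.aemeasurable
  -- the inner integral for fixed u
  have hinner : ∀ u ∈ Set.Ioc s t,
      (∫⁻ y0, F y0 u ∂(expMeasure 1))
        = ENNReal.ofReal (g u * Real.exp (-(∫ r in u..t, lam0 r))) := by
    intro u hu
    have huIcc : u ∈ Set.Icc s t := ⟨le_of_lt hu.1, hu.2⟩
    have hc : 0 ≤ ∫ r in u..t, lam0 r := HonestAux.Lam_nonneg hst' hlam0_nonneg huIcc
    have heq : (fun y0 => F y0 u)
        = Set.indicator {y0 | honestTime s t lam0 y0 < u}
            (fun _ => ENNReal.ofReal (g u)) := by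
      funext y0
      by_cases h : honestTime s t lam0 y0 < u
      · simp [hF, Set.indicator_apply, Set.mem_Ioi, Set.mem_setOf_eq, h]
      · simp [hF, Set.indicator_apply, Set.mem_Ioi, Set.mem_setOf_eq, h]
    have hSmeas : MeasurableSet {y0 | honestTime s t lam0 y0 < u} :=
      hτ0meas measurableSet_Iio
    rw [heq, lintegral_indicator hSmeas, setLIntegral_const]
    -- sandwich to compute the measure
    have hmeasS : expMeasure 1 {y0 | honestTime s t lam0 y0 < u}
        = ENNReal.ofReal (Real.exp (-(∫ r in u..t, lam0 r))) := by
      refine HonestAux.expMeasure_sandwich hc ?_ ?_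
      · -- Ioi (Λ0 u) ⊆ {τ0 < u}
        intro y0 hy0
        rw [Set.mem_Ioi] at hy0
        have hopen : IsOpen {x : ℝ | (∫ r in x..t, lam0 r) < y0} :=
          isOpen_lt (HonestAux.continuous_Lam hlam0 t) continuous_const
        obtain ⟨ε, hε, hball⟩ := Metric.isOpen_iff.1 hopen u hy0
        set u' := max s (u - ε / 2) with hu'def
        have hu'lt : u' < u := max_lt hu.1 (by linarith)
        have hu'ball : u' ∈ Metric.ball u ε := by
          rw [Metric.mem_ball, Real.dist_eq, abs_sub_lt_iff]
          constructor
          · linarith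
          · have : u - ε / 2 ≤ u' := le_max_right _ _
            linarith
        have hΛu' : (∫ r in u'..t, lam0 r) ≤ y0 := le_of_lt (hball hu'ball)
        have hu'Icc : u' ∈ Set.Icc s t := ⟨le_max_left _ _, le_trans (le_of_lt hu'lt) hu.2⟩
        have hinf : sInf {r | r ∈ Set.Icc s t ∧ ∫ x in r..t, lam0 x ≤ y0} ≤ u' :=
          csInf_le (HonestAux.honest_bddBelow y0) ⟨hu'Icc, hΛu'⟩
        have : honestTime s t lam0 y0 ≤ u' := by
          rw [honestTime]
          exact max_le hu'Icc.1 hinf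
        exact lt_of_le_of_lt this hu'lt
      · -- {τ0 < u} ⊆ Ici (Λ0 u) ∪ Iio 0
        intro y0 hy0
        rcases le_or_gt 0 y0 with h0 | h0
        · left
          rw [Set.mem_Ici]
          by_contra hlt
          push_neg at hlt
          have := (HonestAux.honestTime_gt_iff hlam0 hst' hlam0_nonneg h0 huIcc).2 hlt
          exact absurd hy0 (not_lt.2 (le_of_lt this))
        · exact Or.inr h0
    rw [hmeasS]
    exact (ENNReal.ofReal_mul (mul_nonneg (hlam1_nonneg u huIcc)
      (Real.exp_nonneg _))).symm
  -- assemble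
  rw [hstep1, Measure.prod_apply_symm hCmeas]
  rw [lintegral_congr hsec, hswap,
    setLIntegral_congr_fun measurableSet_Ioc (fun u hu => hinner u hu)]
  -- final computation
  set h : ℝ → ℝ := fun u => g u * Real.exp (-(∫ r in u..t, lam0 r)) with hhdef
  have hhcont : Continuous h := hgcont.mul ((HonestAux.continuous_Lam hlam0 t).neg.rexp)
  have hhint : IntegrableOn h (Set.Ioc s t) := hhcont.integrableOn_Ioc
  have hhnn : 0 ≤ᵐ[volume.restrict (Set.Ioc s t)] h := by
    refine (ae_restrict_iff' measurableSet_Ioc).2 (ae_of_all _ ?_)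
    intro u hu
    exact mul_nonneg (mul_nonneg (hlam1_nonneg u ⟨le_of_lt hu.1, hu.2⟩)
      (Real.exp_nonneg _)) (Real.exp_nonneg _)
  rw [show (fun u => ENNReal.ofReal (g u * Real.exp (-(∫ r in u..t, lam0 r))))
      = fun u => ENNReal.ofReal (h u) from rfl]
  rw [← MeasureTheory.ofReal_integral_eq_lintegral_ofReal hhint hhnn,
    ← intervalIntegral.integral_of_le hst']
  congr 1
  refine intervalIntegral.integral_congr ?_
  intro u hu
  rw [Set.uIcc_of_le hst'] at hu
  have hadd : (∫ r in u..t, (lam0 r + lam1 r))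
      = (∫ r in u..t, lam0 r) + ∫ r in u..t, lam1 r :=
    intervalIntegral.integral_add (hlam0.intervalIntegrable u t)
      (hlam1.intervalIntegrable u t)
  simp only [hhdef, hgdef]
  rw [hadd, neg_add, Real.exp_add]
  ring
end

section
/- Let Y¹ and Y⁰ be independent random variables, each exponentially distributed with rate 1, let τ¹ be the honest random time on [s,t] associated with the intensity λ1 and driven by Y¹, and let τ⁰ be the honest random time on [s,t] associated with the intensity λ0 and driven by Y⁰. Then the events {τ⁰ = τ¹} and {τ⁰ = s and τ¹ = s} agree up to a set of probability zero, and P(τ⁰ = τ¹) = exp(-∫_s^t (λ0(u) + λ1(u)) du). -/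
open MeasureTheory ProbabilityTheory Real

section honestAux

variable {s t y : ℝ} {lam : ℝ → ℝ}

lemma lambdaCont (hlam : Continuous lam) (t : ℝ) :
    Continuous fun r : ℝ => ∫ u in r..t, lam u := by
  have h := intervalIntegral.continuous_primitive (μ := MeasureTheory.volume)
    (fun a b => hlam.intervalIntegrable a b) t
  have heq : (fun r : ℝ => ∫ u in r..t, lam u)
      = fun r : ℝ => -∫ u in t..r, lam u := by
    funext r; rw [intervalIntegral.integral_symm]
  rw [heq]; exact h.neg

lemma honest_isLeast (hst : s ≤ t) (hlam : Continuous lam) (hy : 0 ≤ y) :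
    IsLeast {r | r ∈ Set.Icc s t ∧ (∫ u in r..t, lam u) ≤ y} (honestTime s t lam y) := by
  set S := {r | r ∈ Set.Icc s t ∧ (∫ u in r..t, lam u) ≤ y} with hS
  have hne : S.Nonempty := ⟨t, ⟨hst, le_rfl⟩, by rw [intervalIntegral.integral_same]; exact hy⟩
  have hbdd : BddBelow S := ⟨s, fun r hr => hr.1.1⟩
  have hclosed : IsClosed S := by
    have : S = Set.Icc s t ∩ (fun r => ∫ u in r..t, lam u) ⁻¹' Set.Iic y := rfl
    rw [this]
    exact isClosed_Icc.inter (isClosed_Iic.preimage (lambdaCont hlam t))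
  have hmem : sInf S ∈ S := hclosed.csInf_mem hne hbdd
  have hsle : s ≤ sInf S := le_csInf hne fun r hr => hr.1.1
  have hval : honestTime s t lam y = sInf S := max_eq_right hsle
  exact ⟨hval ▸ hmem, fun r hr => hval ▸ csInf_le hbdd hr⟩

lemma honest_eq_s_iff (hst : s ≤ t) (hlam : Continuous lam) (hy : 0 ≤ y) :
    honestTime s t lam y = s ↔ (∫ u in s..t, lam u) ≤ y := by
  obtain ⟨⟨hmem, hint⟩, hlb⟩ := honest_isLeast hst hlam hy
  constructor
  · intro h; rwa [h] at hint
  · intro h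
    exact le_antisymm (hlb ⟨⟨le_rfl, hst⟩, h⟩) hmem.1

lemma honest_ne_s (hst : s ≤ t) (hlam : Continuous lam) (hy : 0 ≤ y)
    (hne : honestTime s t lam y ≠ s) :
    y = ∫ u in (honestTime s t lam y)..t, lam u := by
  obtain ⟨⟨hmem, hint⟩, hlb⟩ := honest_isLeast hst hlam hy
  set m := honestTime s t lam y with hm
  have hsm : s < m := lt_of_le_of_ne hmem.1 (Ne.symm hne)
  refine le_antisymm ?_ hint
  have htend : Filter.Tendsto (fun r => ∫ u in r..t, lam u) (nhdsWithin m (Set.Iio m))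
      (nhds (∫ u in m..t, lam u)) :=
    ((lambdaCont hlam t).tendsto m).mono_left nhdsWithin_le_nhds
  refine ge_of_tendsto htend ?_
  filter_upwards [Ioo_mem_nhdsLT_of_mem (Set.mem_Ioc.mpr ⟨hsm, le_rfl⟩)] with r hr
  by_contra hcon
  push_neg at hcon
  exact absurd (hlb ⟨⟨hr.1.le, hr.2.le.trans hmem.2⟩, hcon.le⟩) (not_le.mpr hr.2)

lemma honest_antitoneOn (hst : s ≤ t) (hlam : Continuous lam) :
    AntitoneOn (honestTime s t lam) (Set.Ici 0) := by
  intro a ha b hb hab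
  obtain ⟨hma, _⟩ := honest_isLeast hst hlam ha
  obtain ⟨_, hlbb⟩ := honest_isLeast hst hlam hb
  exact hlbb ⟨hma.1, hma.2.trans hab⟩

end honestAux

section expAux

lemma expMeasure_singleton (x : ℝ) : expMeasure 1 {x} = 0 := by
  rw [expMeasure, gammaMeasure, withDensity_apply _ (measurableSet_singleton x),
    setLIntegral_measure_zero _ _ (measure_singleton x)]

lemma expMeasure_Ici_s11 {c : ℝ} (hc : 0 ≤ c) :
    expMeasure 1 (Set.Ici c) = ENNReal.ofReal (Real.exp (-c)) := by
  haveI : IsProbabilityMeasure (expMeasure 1) := isProbabilityMeasure_expMeasure one_pos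
  haveI : NullSingletonClass (expMeasure 1) := ⟨expMeasure_singleton⟩
  have h1 : expMeasure 1 (Set.Iic c) = ENNReal.ofReal (1 - Real.exp (-c)) := by
    rw [expMeasure, gammaMeasure, withDensity_apply _ measurableSet_Iic]
    have h := lintegral_exponentialPDF_eq_antiDeriv one_pos c
    rw [if_pos hc, one_mul] at h
    exact h
  have h2 : expMeasure 1 (Set.Iio c) = ENNReal.ofReal (1 - Real.exp (-c)) := by
    rw [measure_congr Iio_ae_eq_Iic]; exact h1
  have hle : Real.exp (-c) ≤ 1 := Real.exp_le_one_iff.mpr (neg_nonpos.mpr hc)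
  rw [← Set.compl_Iio, measure_compl measurableSet_Iio (measure_ne_top _ _), measure_univ, h2,
    ← ENNReal.ofReal_one, ← ENNReal.ofReal_sub _ (sub_nonneg.mpr hle)]
  norm_num

end expAux

/-- With `τ¹`, `τ⁰` the honest times on `[s,t]` associated with `λ₁`, `λ₀`, driven by
independent `Exp(1)` random variables, the events `{τ⁰ = τ¹}` and `{τ⁰ = s ∧ τ¹ = s}`
agree up to a set of probability zero, and
`P(τ⁰ = τ¹) = exp (-∫_s^t (λ₀(u) + λ₁(u)) du)`. -/
theorem diagonal_event
    {Ω : Type*} [MeasurableSpace Ω] (P : Measure Ω) [IsProbabilityMeasure P]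
    (s t : ℝ) (hs : 0 ≤ s) (hst : s < t)
    (lam0 lam1 : ℝ → ℝ) (hlam0 : Continuous lam0) (hlam1 : Continuous lam1)
    (hlam0_nonneg : ∀ u ∈ Set.Icc s t, 0 ≤ lam0 u)
    (hlam1_nonneg : ∀ u ∈ Set.Icc s t, 0 ≤ lam1 u)
    (Y1 Y0 : Ω → ℝ) (hY1 : Measurable Y1) (hY0 : Measurable Y0)
    (hY1law : P.map Y1 = expMeasure 1) (hY0law : P.map Y0 = expMeasure 1)
    (hindep : IndepFun Y1 Y0 P) :
    P (symmDiff {ω | honestTime s t lam0 (Y0 ω) = honestTime s t lam1 (Y1 ω)}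
        {ω | honestTime s t lam0 (Y0 ω) = s ∧ honestTime s t lam1 (Y1 ω) = s}) = 0
    ∧ P {ω | honestTime s t lam0 (Y0 ω) = honestTime s t lam1 (Y1 ω)}
        = ENNReal.ofReal (Real.exp (-(∫ u in s..t, (lam0 u + lam1 u)))) := by
  have hstle : s ≤ t := hst.le
  haveI : IsProbabilityMeasure (expMeasure 1) := isProbabilityMeasure_expMeasure one_pos
  set c0 : ℝ := ∫ u in s..t, lam0 u with hc0def
  set c1 : ℝ := ∫ u in s..t, lam1 u with hc1def
  have hc0 : 0 ≤ c0 := intervalIntegral.integral_nonneg hstle fun u hu => hlam0_nonneg u hu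
  have hc1 : 0 ≤ c1 := intervalIntegral.integral_nonneg hstle fun u hu => hlam1_nonneg u hu
  -- joint law
  have hmap : P.map (fun ω => (Y1 ω, Y0 ω)) = (expMeasure 1).prod (expMeasure 1) := by
    rw [(indepFun_iff_map_prod_eq_prod_map_map hY1.aemeasurable hY0.aemeasurable).mp hindep,
      hY1law, hY0law]
  -- negative values are null
  have hY0neg : P {ω | Y0 ω < 0} = 0 := by
    have h : {ω | Y0 ω < 0} = Y0 ⁻¹' Set.Iio 0 := rfl
    rw [h, ← Measure.map_apply hY0 measurableSet_Iio, hY0law]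
    exact expMeasure_Iio_zero
  have hY1neg : P {ω | Y1 ω < 0} = 0 := by
    have h : {ω | Y1 ω < 0} = Y1 ⁻¹' Set.Iio 0 := rfl
    rw [h, ← Measure.map_apply hY1 measurableSet_Iio, hY1law]
    exact expMeasure_Iio_zero
  have hN : P ({ω | Y0 ω < 0} ∪ {ω | Y1 ω < 0}) = 0 := by
    rw [measure_union_null_iff]; exact ⟨hY0neg, hY1neg⟩
  -- the diagonal curve is null
  set g1' : ℝ → ℝ := fun y => honestTime s t lam1 (max y 0) with hg1'def
  have hg1'_anti : Antitone g1' := by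
    intro a b hab
    exact honest_antitoneOn hstle hlam1 (Set.mem_Ici.mpr (le_max_right a 0))
      (Set.mem_Ici.mpr (le_max_right b 0)) (max_le_max hab le_rfl)
  set F : ℝ → ℝ := fun y => ∫ u in (g1' y)..t, lam0 u with hFdef
  have hF_meas : Measurable F := (lambdaCont hlam0 t).measurable.comp hg1'_anti.measurable
  have hdiag : P {ω | Y0 ω = F (Y1 ω)} = 0 := by
    have hset : MeasurableSet {p : ℝ × ℝ | p.2 = F p.1} :=
      measurableSet_eq_fun measurable_snd (hF_meas.comp measurable_fst)
    have h : {ω | Y0 ω = F (Y1 ω)} = (fun ω => (Y1 ω, Y0 ω)) ⁻¹' {p : ℝ × ℝ | p.2 = F p.1} := rfl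
    rw [h, ← Measure.map_apply (hY1.prodMk hY0) hset, hmap, Measure.prod_apply hset]
    have h2 : ∀ y : ℝ, (expMeasure 1) (Prod.mk y ⁻¹' {p : ℝ × ℝ | p.2 = F p.1}) = 0 := by
      intro y
      have h3 : Prod.mk y ⁻¹' {p : ℝ × ℝ | p.2 = F p.1} = {F y} := by
        ext z; simp [Set.mem_preimage]
      rw [h3]
      exact expMeasure_singleton _
    simp [expMeasure_singleton]
  -- sets
  set A := {ω | honestTime s t lam0 (Y0 ω) = honestTime s t lam1 (Y1 ω)} with hAdef
  set B := {ω | honestTime s t lam0 (Y0 ω) = s ∧ honestTime s t lam1 (Y1 ω) = s} with hBdef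
  have hBA : B ⊆ A := fun ω hω => hω.1.trans hω.2.symm
  have hAB_null : P (A \ B) = 0 := by
    refine measure_mono_null ?_
      (measure_union_null_iff.mpr ⟨hN, hdiag⟩ :
        P (({ω | Y0 ω < 0} ∪ {ω | Y1 ω < 0}) ∪ {ω | Y0 ω = F (Y1 ω)}) = 0)
    rintro ω ⟨hA, hB⟩
    by_cases h0 : Y0 ω < 0
    · exact Or.inl (Or.inl h0)
    by_cases h1 : Y1 ω < 0
    · exact Or.inl (Or.inr h1)
    push_neg at h0 h1
    right
    have hne : honestTime s t lam0 (Y0 ω) ≠ s := by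
      intro h
      exact hB ⟨h, hA ▸ h⟩
    have hval0 : Y0 ω = ∫ u in (honestTime s t lam0 (Y0 ω))..t, lam0 u :=
      honest_ne_s hstle hlam0 h0 hne
    have hmax : max (Y1 ω) 0 = Y1 ω := max_eq_left h1
    show Y0 ω = F (Y1 ω)
    rw [hFdef]
    simp only [hg1'def, hmax]
    rw [← hA]
    exact hval0
  have hsymm : symmDiff A B = A \ B := by
    rw [Set.symmDiff_def, Set.diff_eq_empty.mpr hBA, Set.union_empty]
  refine ⟨by rw [hsymm]; exact hAB_null, ?_⟩
  -- P A = P B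
  have hPA : P A = P B := by
    apply le_antisymm
    · calc P A = P (B ∪ A \ B) := by rw [Set.union_diff_cancel hBA]
        _ ≤ P B + P (A \ B) := measure_union_le _ _
        _ = P B := by rw [hAB_null, add_zero]
    · exact measure_mono hBA
  -- B agrees a.e. with C
  set C := {ω | c1 ≤ Y1 ω ∧ c0 ≤ Y0 ω} with hCdef
  have hkey : ∀ ω, 0 ≤ Y0 ω → 0 ≤ Y1 ω → (ω ∈ B ↔ ω ∈ C) := by
    intro ω h0 h1
    constructor
    · rintro ⟨hb0, hb1⟩
      exact ⟨(honest_eq_s_iff hstle hlam1 h1).mp hb1, (honest_eq_s_iff hstle hlam0 h0).mp hb0⟩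
    · rintro ⟨hcY1, hcY0⟩
      exact ⟨(honest_eq_s_iff hstle hlam0 h0).mpr hcY0, (honest_eq_s_iff hstle hlam1 h1).mpr hcY1⟩
  have hBC : P B = P C := by
    apply measure_congr
    rw [MeasureTheory.ae_eq_set]
    constructor
    · refine measure_mono_null ?_ hN
      rintro ω ⟨hb, hc⟩
      by_contra hno
      simp only [Set.mem_union, Set.mem_setOf_eq, not_or, not_lt] at hno
      exact hc ((hkey ω hno.1 hno.2).mp hb)
    · refine measure_mono_null ?_ hN
      rintro ω ⟨hcm, hb⟩
      by_contra hno
      simp only [Set.mem_union, Set.mem_setOf_eq, not_or, not_lt] at hno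
      exact hb ((hkey ω hno.1 hno.2).mpr hcm)
  -- compute P C
  have hPC : P C = ENNReal.ofReal (Real.exp (-c1)) * ENNReal.ofReal (Real.exp (-c0)) := by
    have h : C = (fun ω => (Y1 ω, Y0 ω)) ⁻¹' (Set.Ici c1 ×ˢ Set.Ici c0) := by
      ext ω; simp [hCdef, Set.mem_prod]
    rw [h, ← Measure.map_apply (hY1.prodMk hY0) (measurableSet_Ici.prod measurableSet_Ici),
      hmap, Measure.prod_prod, expMeasure_Ici_s11 hc1, expMeasure_Ici_s11 hc0]
  rw [hPA, hBC, hPC, ← ENNReal.ofReal_mul (Real.exp_nonneg _), ← Real.exp_add]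
  congr 1
  have hadd : (∫ u in s..t, (lam0 u + lam1 u)) = c0 + c1 :=
    intervalIntegral.integral_add (hlam0.intervalIntegrable _ _) (hlam1.intervalIntegrable _ _)
  rw [hadd]
  ring
end

section
/- (Mixing in total variation without stationarity.) Suppose λ0, λ1 : ℝ → ℝ are continuous and nonnegative on [s,∞) and ∫_s^t (λ0(u)+λ1(u)) du → ∞ as t → ∞. Then the rows of the transition matrix merge in total variation: |P11(s,t) - P01(s,t)| + |P10(s,t) - P00(s,t)| → 0 as t → ∞. -/
open MeasureTheory Real Filter

lemma key_ftc (s t : ℝ) (lam : ℝ → ℝ) (hlam : Continuous lam) :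
    (∫ v in s..t, Real.exp (-(∫ r in v..t, lam r)) * lam v)
      = 1 - Real.exp (-(∫ r in s..t, lam r)) := by
  set F : ℝ → ℝ := fun v => ∫ r in s..v, lam r with hFdef
  have hFd : ∀ v : ℝ, HasDerivAt F (lam v) v := fun v =>
    intervalIntegral.integral_hasDerivAt_right (hlam.intervalIntegrable s v)
      (hlam.stronglyMeasurableAtFilter volume (nhds v)) hlam.continuousAt
  have hFcont : Continuous F :=
    continuous_iff_continuousAt.2 fun v => (hFd v).continuousAt
  have hvt : ∀ v : ℝ, (∫ r in v..t, lam r) = F t - F v := by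
    intro v
    rw [hFdef]
    simp only
    rw [← intervalIntegral.integral_interval_sub_left (hlam.intervalIntegrable s t)
      (hlam.intervalIntegrable s v)]
  have hgd : ∀ v : ℝ, HasDerivAt (fun v => Real.exp (F v - F t))
      (Real.exp (-(∫ r in v..t, lam r)) * lam v) v := by
    intro v
    have := ((hFd v).sub_const (F t)).exp
    simpa [hvt v, neg_sub] using this
  have hint : (∫ v in s..t, Real.exp (-(∫ r in v..t, lam r)) * lam v)
      = Real.exp (F t - F t) - Real.exp (F s - F t) := by
    apply intervalIntegral.integral_eq_sub_of_hasDerivAt (fun v _ => hgd v)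
    apply Continuous.intervalIntegrable
    have : Continuous fun v => Real.exp (F v - F t) * lam v :=
      ((hFcont.sub continuous_const).rexp).mul hlam
    convert this using 2 with v
    rw [hvt v, neg_sub]
  rw [hint]
  have hFs : F s = 0 := by simp [hFdef]
  simp [hFs, hvt s]

/-- Mixing in total variation without stationarity: if `λ₀, λ₁` are continuous,
nonnegative on `[s,∞)`, and `∫_s^t (λ₀+λ₁)(u) du → ∞` as `t → ∞`, then the rows of the
transition matrix merge in total variation:
`|P₁₁(s,t) - P₀₁(s,t)| + |P₁₀(s,t) - P₀₀(s,t)| → 0` as `t → ∞`, where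
`P₀₁(s,t) = ∫_s^t exp (-∫_v^t (λ₀+λ₁)(r) dr) λ₀(v) dv`, `P₀₀ = 1 - P₀₁`,
`P₁₀(s,t) = ∫_s^t exp (-∫_v^t (λ₀+λ₁)(r) dr) λ₁(v) dv`, `P₁₁ = 1 - P₁₀`. -/
theorem mixing_total_variation
    (s : ℝ) (hs : 0 ≤ s)
    (lam0 lam1 : ℝ → ℝ) (hlam0 : Continuous lam0) (hlam1 : Continuous lam1)
    (hlam0_nonneg : ∀ u, s ≤ u → 0 ≤ lam0 u)
    (hlam1_nonneg : ∀ u, s ≤ u → 0 ≤ lam1 u)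
    (hdiv : Tendsto (fun t => ∫ u in s..t, (lam0 u + lam1 u)) atTop atTop) :
    Tendsto (fun t =>
        |(1 - ∫ v in s..t, Real.exp (-(∫ r in v..t, (lam0 r + lam1 r))) * lam1 v)
            - (∫ v in s..t, Real.exp (-(∫ r in v..t, (lam0 r + lam1 r))) * lam0 v)|
        + |(∫ v in s..t, Real.exp (-(∫ r in v..t, (lam0 r + lam1 r))) * lam1 v)
            - (1 - ∫ v in s..t, Real.exp (-(∫ r in v..t, (lam0 r + lam1 r))) * lam0 v)|)
      atTop (nhds 0) := by
  have hlam : Continuous fun u => lam0 u + lam1 u := hlam0.add hlam1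
  have hexp : ∀ t : ℝ, Continuous fun v => Real.exp (-(∫ r in v..t, (lam0 r + lam1 r))) := by
    intro t
    have hFd : ∀ v : ℝ, HasDerivAt (fun v => ∫ r in s..v, (lam0 r + lam1 r))
        (lam0 v + lam1 v) v := fun v =>
      intervalIntegral.integral_hasDerivAt_right (hlam.intervalIntegrable s v)
        (hlam.stronglyMeasurableAtFilter volume (nhds v)) hlam.continuousAt
    have hFcont : Continuous fun v => ∫ r in s..v, (lam0 r + lam1 r) :=
      continuous_iff_continuousAt.2 fun v => (hFd v).continuousAt
    have : Continuous fun v =>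
        Real.exp (-((∫ r in s..t, (lam0 r + lam1 r)) - ∫ r in s..v, (lam0 r + lam1 r))) :=
      (continuous_const.sub hFcont).neg.rexp
    convert this using 2 with v
    rw [← intervalIntegral.integral_interval_sub_left (hlam.intervalIntegrable s t)
      (hlam.intervalIntegrable s v)]
  have hsum : ∀ t : ℝ,
      (∫ v in s..t, Real.exp (-(∫ r in v..t, (lam0 r + lam1 r))) * lam1 v)
      + (∫ v in s..t, Real.exp (-(∫ r in v..t, (lam0 r + lam1 r))) * lam0 v)
      = 1 - Real.exp (-(∫ r in s..t, (lam0 r + lam1 r))) := by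
    intro t
    rw [← key_ftc s t _ hlam, ← intervalIntegral.integral_add]
    · congr 1; ext v; ring
    · exact (((hexp t).mul hlam1)).intervalIntegrable s t
    · exact (((hexp t).mul hlam0)).intervalIntegrable s t
  have heq : ∀ t : ℝ,
      |(1 - ∫ v in s..t, Real.exp (-(∫ r in v..t, (lam0 r + lam1 r))) * lam1 v)
          - (∫ v in s..t, Real.exp (-(∫ r in v..t, (lam0 r + lam1 r))) * lam0 v)|
      + |(∫ v in s..t, Real.exp (-(∫ r in v..t, (lam0 r + lam1 r))) * lam1 v)
          - (1 - ∫ v in s..t, Real.exp (-(∫ r in v..t, (lam0 r + lam1 r))) * lam0 v)|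
      = 2 * Real.exp (-(∫ r in s..t, (lam0 r + lam1 r))) := by
    intro t
    have h := hsum t
    set a := ∫ v in s..t, Real.exp (-(∫ r in v..t, (lam0 r + lam1 r))) * lam1 v
    set b := ∫ v in s..t, Real.exp (-(∫ r in v..t, (lam0 r + lam1 r))) * lam0 v
    set E := Real.exp (-(∫ r in s..t, (lam0 r + lam1 r))) with hE
    have h1 : (1 : ℝ) - a - b = E := by linarith
    have h2 : a - (1 - b) = -E := by linarith
    rw [h1, h2, abs_neg, abs_of_pos (Real.exp_pos _)]
    ring
  simp only [heq]
  have : Tendsto (fun t => Real.exp (-(∫ r in s..t, (lam0 r + lam1 r)))) atTop (nhds 0) :=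
    Real.tendsto_exp_atBot.comp (tendsto_neg_atBot_iff.2 hdiv)
  simpa using this.const_mul 2
end

section
/- (Solution of the Kolmogorov forward equations.) Suppose λ0, λ1 : ℝ → ℝ are continuous and nonnegative on [s,∞). Then the functions g(u) := P01(s,u) and h(u) := P10(s,u) satisfy, for every u > s, the derivative identities g'(u) = (1 - g(u))·λ0(u) - g(u)·λ1(u) and h'(u) = (1 - h(u))·λ1(u) - h(u)·λ0(u), together with the initial conditions g(s) = h(s) = 0. -/
open MeasureTheory Real


lemma kfs_aux (s : ℝ) (f μ : ℝ → ℝ) (hf : Continuous f) (hμ : Continuous μ)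
    (G : ℝ → ℝ)
    (hG : G = fun u => ∫ v in s..u, Real.exp (-(∫ r in v..u, f r)) * μ v) (u : ℝ) :
    HasDerivAt G (μ u - G u * f u) u := by
  set Λ : ℝ → ℝ := fun u => ∫ r in s..u, f r with hΛdef
  have hΛ : ∀ x, HasDerivAt Λ (f x) x := fun x =>
    intervalIntegral.integral_hasDerivAt_right (hf.intervalIntegrable s x)
      (hf.stronglyMeasurableAtFilter _ _) hf.continuousAt
  have hΛc : Continuous Λ := by
    rw [continuous_iff_continuousAt]; exact fun x => (hΛ x).continuousAt
  have key : ∀ v x : ℝ, (∫ r in v..x, f r) = Λ x - Λ v := by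
    intro v x
    rw [hΛdef]
    exact (intervalIntegral.integral_interval_sub_left
      (hf.intervalIntegrable s x) (hf.intervalIntegrable s v)).symm
  have hGfact : G = fun x => Real.exp (-Λ x) * ∫ v in s..x, Real.exp (Λ v) * μ v := by
    rw [hG]; funext x
    rw [← intervalIntegral.integral_const_mul]
    apply intervalIntegral.integral_congr
    intro v _
    simp only [key v x, neg_sub, Real.exp_sub, Real.exp_neg]
    field_simp
  set F : ℝ → ℝ := fun x => ∫ v in s..x, Real.exp (Λ v) * μ v with hFdef
  have hF : HasDerivAt F (Real.exp (Λ u) * μ u) u := by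
    refine intervalIntegral.integral_hasDerivAt_right
      (((hΛc.rexp).mul hμ).intervalIntegrable s u)
      (((hΛc.rexp).mul hμ).stronglyMeasurableAtFilter _ _)
      ((hΛc.rexp).mul hμ).continuousAt
  have hE : HasDerivAt (fun x => Real.exp (-Λ x)) (Real.exp (-Λ u) * (-f u)) u := by
    have := ((hΛ u).neg).exp
    simpa using this
  have hprod : HasDerivAt (fun x => Real.exp (-Λ x) * F x)
      (Real.exp (-Λ u) * (-f u) * F u + Real.exp (-Λ u) * (Real.exp (Λ u) * μ u)) u :=
    hE.fun_mul hF
  rw [hGfact]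
  convert hprod using 1
  show μ u - Real.exp (-Λ u) * F u * f u = _
  have h1 : Real.exp (-Λ u) * Real.exp (Λ u) = 1 := by
    rw [← Real.exp_add]; simp
  linear_combination (-(μ u)) * h1

/-- Solution of the Kolmogorov forward equations: if `λ₀, λ₁` are continuous and
nonnegative on `[s,∞)`, then `g(u) := P₀₁(s,u) = ∫_s^u exp (-∫_v^u (λ₀+λ₁)(r) dr) λ₀(v) dv`
and `h(u) := P₁₀(s,u) = ∫_s^u exp (-∫_v^u (λ₀+λ₁)(r) dr) λ₁(v) dv` satisfy, for `u > s`,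
`g'(u) = (1 - g(u)) λ₀(u) - g(u) λ₁(u)` and `h'(u) = (1 - h(u)) λ₁(u) - h(u) λ₀(u)`,
with `g(s) = h(s) = 0`. -/
theorem kolmogorov_forward_solution
    (s : ℝ) (hs : 0 ≤ s)
    (lam0 lam1 : ℝ → ℝ) (hlam0 : Continuous lam0) (hlam1 : Continuous lam1)
    (hlam0_nonneg : ∀ u, s ≤ u → 0 ≤ lam0 u)
    (hlam1_nonneg : ∀ u, s ≤ u → 0 ≤ lam1 u)
    (g h : ℝ → ℝ)
    (hg : g = fun u => ∫ v in s..u, Real.exp (-(∫ r in v..u, (lam0 r + lam1 r))) * lam0 v)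
    (hh : h = fun u => ∫ v in s..u, Real.exp (-(∫ r in v..u, (lam0 r + lam1 r))) * lam1 v) :
    (∀ u, s < u → HasDerivAt g ((1 - g u) * lam0 u - g u * lam1 u) u)
    ∧ (∀ u, s < u → HasDerivAt h ((1 - h u) * lam1 u - h u * lam0 u) u)
    ∧ g s = 0 ∧ h s = 0 := by
  have hgd : ∀ u : ℝ, HasDerivAt g (lam0 u - g u * (lam0 u + lam1 u)) u :=
    fun u => kfs_aux s (fun r => lam0 r + lam1 r) lam0 (hlam0.add hlam1) hlam0 g hg u
  have hhd : ∀ u : ℝ, HasDerivAt h (lam1 u - h u * (lam0 u + lam1 u)) u :=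
    fun u => kfs_aux s (fun r => lam0 r + lam1 r) lam1 (hlam0.add hlam1) hlam1 h hh u
  refine ⟨fun u _ => ?_, fun u _ => ?_, by simp [hg], by simp [hh]⟩
  · have := hgd u; convert this using 1; ring
  · have := hhd u; convert this using 1; ring
end
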